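/- Let S be a maximum obtuse almost-equiangular subset of S^{n-1} with distance graph G. Then the complement of G is quadrangular: no two distinct vertices have exactly one common neighbor in the complement of G. -/

import Mathlib

open scoped RealInnerProductSpace
open Matrix

section specAux
variable {N : ℕ} (A : Matrix (Fin N) (Fin N) ℝ) (hA : A.IsHermitian)

private lemma aux_conj :
    A * A = (hA.eigenvectorUnitary : Matrix (Fin N) (Fin N) ℝ) *
      (diagonal (RCLike.ofReal ∘ hA.eigenvalues) * diagonal (RCLike.ofReal ∘ hA.eigenvalues)) *
      (star (hA.eigenvectorUnitary : Matrix (Fin N) (Fin N) ℝ)) := by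
  set U : Matrix (Fin N) (Fin N) ℝ := (hA.eigenvectorUnitary : Matrix (Fin N) (Fin N) ℝ) with hU
  have e1 : star U * U = 1 := Matrix.mem_unitaryGroup_iff'.mp (hA.eigenvectorUnitary).2
  have key : ∀ X : Matrix (Fin N) (Fin N) ℝ, star U * (U * X) = X := by
    intro X; rw [← mul_assoc, e1, one_mul]
  conv_lhs => rw [hA.spectral_theorem, Unitary.conjStarAlgAut_apply]
  simp only [← hU, mul_assoc, key]

private lemma aux_trace2 : (A * A).trace = ∑ i, hA.eigenvalues i ^ 2 := by
  rw [aux_conj A hA, Matrix.trace_mul_comm, ← mul_assoc,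
    Matrix.mem_unitaryGroup_iff'.mp (hA.eigenvectorUnitary).2, one_mul,
    Matrix.diagonal_mul_diagonal]
  simp [Matrix.trace_diagonal, sq]

private lemma aux_trace1 : A.trace = ∑ i, hA.eigenvalues i := by
  conv_lhs => rw [hA.spectral_theorem, Unitary.conjStarAlgAut_apply]
  rw [Matrix.trace_mul_comm, ← Matrix.mul_assoc,
    Matrix.mem_unitaryGroup_iff'.mp (hA.eigenvectorUnitary).2]
  simp [Matrix.trace_diagonal]

private lemma aux_sq (h : ∀ i, hA.eigenvalues i = 0 ∨ hA.eigenvalues i = 2) :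
    A * A = (2:ℝ) • A := by
  rw [aux_conj A hA]
  conv_rhs => rw [hA.spectral_theorem, Unitary.conjStarAlgAut_apply]
  rw [Matrix.diagonal_mul_diagonal]
  have h1 : (fun i => (RCLike.ofReal ∘ hA.eigenvalues) i * (RCLike.ofReal ∘ hA.eigenvalues) i)
      = ((2:ℝ) • (RCLike.ofReal ∘ hA.eigenvalues) : Fin N → ℝ) := by
    funext i
    rcases h i with h' | h' <;> simp [h']
  rw [h1, Matrix.diagonal_smul]
  simp only [Matrix.mul_smul, Matrix.smul_mul]

end specAux

theorem complement_distance_graph_quadrangular (n : ℕ)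
    (x : Fin (2 * (n + 1)) → EuclideanSpace ℝ (Fin n))
    (hinj : Function.Injective x)
    (hunit : ∀ i, ‖x i‖ = 1)
    (halmost : ∀ i j k : Fin (2 * (n + 1)), i ≠ j → i ≠ k → j ≠ k →
      ⟪x i, x j⟫ = -1 / n ∨ ⟪x i, x k⟫ = -1 / n ∨ ⟪x j, x k⟫ = -1 / n) :
    ∀ i j : Fin (2 * (n + 1)), i ≠ j →
      ¬(∃! k : Fin (2 * (n + 1)), k ≠ i ∧ k ≠ j ∧
        ⟪x k, x i⟫ ≠ -1 / n ∧ ⟪x k, x j⟫ ≠ -1 / n) := by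
  classical
  intro i j hij
  rintro ⟨k, ⟨hki, hkj, hxki, hxkj⟩, huniq⟩
  rcases Nat.eq_zero_or_pos n with hn0 | hn
  · subst hn0
    have h1 := hunit i
    have h2 : x i = 0 := Subsingleton.elim _ _
    rw [h2, norm_zero] at h1
    exact one_ne_zero h1.symm
  have hnpos : (0:ℝ) < (n:ℝ) := by exact_mod_cast hn
  have hn1pos : (0:ℝ) < (n:ℝ) + 1 := by positivity
  set c1 : ℝ := Real.sqrt ((n:ℝ) / ((n:ℝ) + 1)) with hc1
  set c2 : ℝ := Real.sqrt (1 / ((n:ℝ) + 1)) with hc2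
  set Y : Matrix (Fin (n + 1)) (Fin (2 * (n + 1))) ℝ :=
    fun t u => if h : (t : ℕ) < n then c1 * x u ⟨(t:ℕ), h⟩ else c2 with hY
  set M : Matrix (Fin (2 * (n + 1))) (Fin (2 * (n + 1))) ℝ := Yᴴ * Y with hM
  have hinner : ∀ u v : Fin (2 * (n + 1)), ⟪x u, x v⟫ = ∑ t : Fin n, x u t * x v t := by
    intro u v
    simp [PiLp.inner_apply, RCLike.inner_apply, conj_trivial]
    exact Finset.sum_congr rfl (fun _ _ => mul_comm _ _)
  have hcast : ∀ t : Fin n, ((t.castSucc : Fin (n+1)) : ℕ) < n := by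
    intro t; simp only [Fin.coe_castSucc]; exact t.isLt
  have hYcast : ∀ (t : Fin n) (w : Fin (2 * (n + 1))), Y t.castSucc w = c1 * x w t := by
    intro t w
    simp only [hY]
    rw [dif_pos (hcast t)]
    have he : (⟨((t.castSucc : Fin (n+1)) : ℕ), hcast t⟩ : Fin n) = t := Fin.ext (by simp)
    rw [he]
  have hYlast : ∀ w : Fin (2 * (n + 1)), Y (Fin.last n) w = c2 := by
    intro w
    simp only [hY]
    rw [dif_neg (by simp)]
  have hc1sq : c1 * c1 = (n:ℝ) / ((n:ℝ)+1) := Real.mul_self_sqrt (by positivity)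
  have hc2sq : c2 * c2 = 1 / ((n:ℝ)+1) := Real.mul_self_sqrt (by positivity)
  have hMentry : ∀ u v, M u v = ((n:ℝ) * ⟪x u, x v⟫ + 1) / ((n:ℝ) + 1) := by
    intro u v
    have h0 : M u v = ∑ t : Fin (n+1), Y t u * Y t v := by
      simp [hM, Matrix.mul_apply, Matrix.conjTranspose_apply]
    rw [h0, Fin.sum_univ_castSucc]
    have hsum : ∀ t : Fin n, Y t.castSucc u * Y t.castSucc v
        = ((n:ℝ) / ((n:ℝ)+1)) * (x u t * x v t) := by
      intro t
      rw [hYcast t u, hYcast t v, ← hc1sq]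
      ring
    rw [Finset.sum_congr rfl (fun t _ => hsum t), hYlast u, hYlast v, hc2sq,
      ← Finset.mul_sum, ← hinner]
    field_simp
  have hsymmM : ∀ u v, M u v = M v u := by
    intro u v; rw [hMentry, hMentry, real_inner_comm]
  have hdiagM : ∀ u, M u u = 1 := by
    intro u
    rw [hMentry]
    have h1 : ⟪x u, x u⟫ = 1 := by
      rw [real_inner_self_eq_norm_sq, hunit u]; norm_num
    rw [h1]
    field_simp
  have hzeroM : ∀ u v, M u v = 0 ↔ ⟪x u, x v⟫ = -1 / (n:ℝ) := by
    intro u v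
    rw [hMentry, div_eq_zero_iff]
    constructor
    · rintro (h | h)
      · rw [eq_div_iff hnpos.ne']
        linarith
      · linarith
    · intro h
      left
      rw [h]
      field_simp
      norm_num
  have hPSD : M.PosSemidef := Matrix.posSemidef_conjTranspose_mul_self Y
  have hHerm : M.IsHermitian := hPSD.isHermitian
  have hrank : M.rank ≤ n + 1 := by
    rw [hM, Matrix.rank_conjTranspose_mul_self]
    exact (Matrix.rank_le_card_height Y).trans (by simp)
  have hrowsum : ∀ u, ∑ v ∈ Finset.univ.erase u, (M u v)^2 ≤ 1 := by
    intro u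
    set y : Fin (2 * (n + 1)) → EuclideanSpace ℝ (Fin (n+1)) :=
      fun w => (WithLp.equiv 2 (Fin (n+1) → ℝ)).symm (fun s => Y s w) with hy
    have hyinner : ∀ w w', ⟪y w, y w'⟫ = M w w' := by
      intro w w'
      rw [hM]
      simp [hy, PiLp.inner_apply, RCLike.inner_apply, conj_trivial,
        Matrix.mul_apply, Matrix.conjTranspose_apply]
      exact Finset.sum_congr rfl (fun _ _ => mul_comm _ _)
    set T : Finset (Fin (2 * (n + 1))) :=
      Finset.univ.filter (fun v => v ≠ u ∧ M u v ≠ 0) with hT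
    have horth : Orthonormal ℝ (fun a : {v // v ∈ T} => y (a : Fin (2 * (n + 1)))) := by
      rw [orthonormal_iff_ite]
      intro a b
      by_cases hab : a = b
      · subst hab
        rw [hyinner, hdiagM]
        simp
      · rw [if_neg hab]
        have hvab : (a : Fin (2 * (n + 1))) ≠ (b : Fin (2 * (n + 1))) :=
          fun h => hab (Subtype.ext h)
        have ha := Finset.mem_filter.mp a.2
        have hb := Finset.mem_filter.mp b.2
        have h3 := halmost u a b (Ne.symm ha.2.1) (Ne.symm hb.2.1) hvab
        rw [hyinner]
        rcases h3 with h | h | h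
        · exact (ha.2.2 ((hzeroM u a).mpr h)).elim
        · exact (hb.2.2 ((hzeroM u b).mpr h)).elim
        · exact (hzeroM a b).mpr h
    have hbessel := horth.sum_inner_products_le (x := y u) (s := Finset.univ)
    have hnormyu : ‖y u‖ ^ 2 = 1 := by
      rw [← real_inner_self_eq_norm_sq, hyinner, hdiagM]
    rw [hnormyu] at hbessel
    have hTsum : ∑ v ∈ T, (M u v)^2 ≤ 1 := by
      calc ∑ v ∈ T, (M u v)^2 = ∑ a : {v // v ∈ T}, (M u (a : Fin (2 * (n + 1))))^2 :=
            (Finset.sum_coe_sort T (fun v => (M u v)^2)).symm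
        _ = ∑ a : {v // v ∈ T}, ‖⟪y (a : Fin (2 * (n + 1))), y u⟫‖ ^ 2 := by
            apply Finset.sum_congr rfl
            intro a _
            rw [hyinner, Real.norm_eq_abs, sq_abs, hsymmM]
        _ ≤ 1 := hbessel
    refine le_trans (le_of_eq ?_) hTsum
    refine (Finset.sum_subset ?_ ?_).symm
    · intro v hv
      exact Finset.mem_erase.mpr ⟨(Finset.mem_filter.mp hv).2.1, Finset.mem_univ v⟩
    · intro v hv hvT
      have hvne : v ≠ u := (Finset.mem_erase.mp hv).1
      have h5 : ¬ (v ≠ u ∧ M u v ≠ 0) := fun h => hvT (Finset.mem_filter.mpr ⟨Finset.mem_univ v, h⟩)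
      push_neg at h5
      rw [h5 hvne]
      simp
  have htr : M.trace = ((2 * (n + 1) : ℕ) : ℝ) := by
    have h0 : M.trace = ∑ u, M u u := rfl
    rw [h0, Finset.sum_congr rfl (fun u _ => hdiagM u)]
    simp
  have htr2 : (M * M).trace ≤ 2 * ((2 * (n + 1) : ℕ) : ℝ) := by
    have h0 : (M * M).trace = ∑ u, ∑ v, M u v * M v u := by
      simp [Matrix.trace, Matrix.diag, Matrix.mul_apply]
    rw [h0]
    have h1 : ∀ u : Fin (2 * (n + 1)), ∑ v, M u v * M v u ≤ 2 := by
      intro u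
      have h2a : ∑ v, M u v * M v u
          = M u u * M u u + ∑ v ∈ Finset.univ.erase u, (M u v * M v u) :=
        (Finset.add_sum_erase _ _ (Finset.mem_univ u)).symm
      have h2b : ∀ v ∈ Finset.univ.erase u, M u v * M v u = (M u v)^2 := by
        intro v _
        rw [sq, ← hsymmM u v]
      rw [h2a, Finset.sum_congr rfl h2b, hdiagM]
      have := hrowsum u
      linarith
    calc ∑ u, ∑ v, M u v * M v u ≤ ∑ _u : Fin (2 * (n + 1)), (2:ℝ) :=
          Finset.sum_le_sum (fun u _ => h1 u)
      _ = 2 * ((2 * (n + 1) : ℕ) : ℝ) := by simp [mul_comm]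
  set μ : Fin (2 * (n + 1)) → ℝ := hHerm.eigenvalues with hμ
  have hnn : ∀ t, 0 ≤ μ t := fun t => hPSD.eigenvalues_nonneg t
  have hsum1 : ∑ t, μ t = ((2 * (n + 1) : ℕ) : ℝ) := by
    rw [← aux_trace1 M hHerm]; exact htr
  have hsum2 : ∑ t, (μ t)^2 ≤ 2 * ((2 * (n + 1) : ℕ) : ℝ) := by
    rw [← aux_trace2 M hHerm]; exact htr2
  set S : Finset (Fin (2 * (n + 1))) := Finset.univ.filter (fun t => μ t ≠ 0) with hS
  have hcard : S.card ≤ n + 1 := by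
    have h0 := hHerm.rank_eq_card_non_zero_eigs
    rw [Fintype.card_subtype, ← hμ, ← hS] at h0
    rw [← h0]
    exact hrank
  have heig : ∀ t, μ t = 0 ∨ μ t = 2 := by
    have hs1 : ∑ t ∈ S, μ t = ((2 * (n + 1) : ℕ) : ℝ) := by
      rw [← hsum1]
      apply Finset.sum_subset (Finset.subset_univ S)
      intro t _ ht
      have : ¬ μ t ≠ 0 := fun h => ht (Finset.mem_filter.mpr ⟨Finset.mem_univ t, h⟩)
      push_neg at this
      exact this
    have hs2 : ∑ t ∈ S, (μ t)^2 ≤ 2 * ((2 * (n + 1) : ℕ) : ℝ) := by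
      refine le_trans (le_of_eq ?_) hsum2
      apply Finset.sum_subset (Finset.subset_univ S)
      intro t _ ht
      have : ¬ μ t ≠ 0 := fun h => ht (Finset.mem_filter.mpr ⟨Finset.mem_univ t, h⟩)
      push_neg at this
      rw [this]
      simp
    have hexp : ∑ t ∈ S, (μ t - 2)^2
        = (∑ t ∈ S, (μ t)^2) - 4 * (∑ t ∈ S, μ t) + 4 * S.card := by
      rw [Finset.sum_congr rfl (fun t _ => by ring :
        ∀ t ∈ S, (μ t - 2)^2 = (μ t)^2 - 4 * μ t + 4)]
      rw [Finset.sum_add_distrib, Finset.sum_sub_distrib, ← Finset.mul_sum, Finset.sum_const,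
        nsmul_eq_mul]
      ring
    have hScard : (S.card : ℝ) ≤ ((n:ℝ) + 1) := by
      have := hcard
      exact_mod_cast this
    have hcount : ((2 * (n + 1) : ℕ) : ℝ) = 2 * ((n:ℝ) + 1) := by push_cast; ring
    have hle0 : ∑ t ∈ S, (μ t - 2)^2 ≤ 0 := by
      rw [hexp, hs1, hcount]
      nlinarith [hs2]
    have hzero : ∀ t ∈ S, (μ t - 2)^2 = 0 := by
      intro t ht
      have h1 : ∀ t ∈ S, (0:ℝ) ≤ (μ t - 2)^2 := fun t _ => sq_nonneg _
      have := (Finset.sum_eq_zero_iff_of_nonneg h1).mp (le_antisymm hle0 (Finset.sum_nonneg h1))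
      exact this t ht
    intro t
    by_cases ht : μ t = 0
    · exact Or.inl ht
    · right
      have htS : t ∈ S := Finset.mem_filter.mpr ⟨Finset.mem_univ t, ht⟩
      have := hzero t htS
      have := pow_eq_zero_iff (n := 2) (by norm_num) |>.mp this
      linarith
  have hsq : M * M = (2:ℝ) • M := aux_sq M hHerm (by rw [← hμ]; exact heig)
  -- final contradiction
  have hentry : (M * M) i j = 2 * M i j := by
    rw [hsq]
    simp
  have hmul : (M * M) i j = ∑ v, M i v * M v j := by
    simp [Matrix.mul_apply]
  have hterm : ∀ v : Fin (2 * (n + 1)), v ∉ ({i, j, k} : Finset (Fin (2 * (n + 1)))) →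
      M i v * M v j = 0 := by
    intro v hv
    simp only [Finset.mem_insert, Finset.mem_singleton, not_or] at hv
    obtain ⟨hvi, hvj, hvk⟩ := hv
    have hnot : ¬ (v ≠ i ∧ v ≠ j ∧ ⟪x v, x i⟫ ≠ -1 / (n:ℝ) ∧ ⟪x v, x j⟫ ≠ -1 / (n:ℝ)) := by
      intro h
      exact hvk (huniq v h)
    push_neg at hnot
    by_cases h : ⟪x v, x i⟫ = -1 / (n:ℝ)
    · rw [hsymmM i v, (hzeroM v i).mpr h, zero_mul]
    · rw [(hzeroM v j).mpr (hnot hvi hvj h), mul_zero]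
  have hijk : ∑ v, M i v * M v j = M i i * M i j + M i j * M j j + M i k * M k j := by
    have hsub : ∑ v, M i v * M v j = ∑ v ∈ ({i, j, k} : Finset (Fin (2 * (n + 1)))),
        M i v * M v j := by
      symm
      apply Finset.sum_subset (Finset.subset_univ _)
      intro v _ hv
      exact hterm v hv
    rw [hsub]
    have hjk : j ∉ ({k} : Finset (Fin (2 * (n + 1)))) := by
      simp only [Finset.mem_singleton]
      exact fun h => hkj h.symm
    have hik : i ∉ ({j, k} : Finset (Fin (2 * (n + 1)))) := by
      simp only [Finset.mem_insert, Finset.mem_singleton]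
      push_neg
      exact ⟨hij, fun h => hki h.symm⟩
    rw [Finset.sum_insert hik, Finset.sum_insert hjk, Finset.sum_singleton]
    ring
  have hMik : M i k ≠ 0 := by
    rw [hsymmM i k]
    intro h
    exact hxki ((hzeroM k i).mp h)
  have hMkj : M k j ≠ 0 := by
    intro h
    exact hxkj ((hzeroM k j).mp h)
  have hfinal : M i k * M k j = 0 := by
    have := hentry
    rw [hmul, hijk, hdiagM i, hdiagM j] at this
    linarith
  exact (mul_ne_zero hMik hMkj) hfinal
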